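/- arXiv:1712.08480 — 5 statements merged into one kernel-verified Lean document; each statement's English description precedes it below -/
import Mathlib

section
/- Let f be a real-valued function on the Hermitian matrices in ℂ^{d×d} that is continuous on the set of density matrices, with f* := inf{ f(ρ) : ρ a density matrix } > −∞. For λ > 0 set f_λ* := inf{ f(ρ) − λ·Real.log(det ρ) : ρ a non-singular density matrix } (for positive definite ρ, det ρ is a positive real number). Then f_λ* converges to f* as λ → 0 from the right; equivalently, inf_{λ>0} f_λ* = f*. -/
open Matrix Filter
open scoped ComplexOrder Topology

variable {d : ℕ}

/-- A density matrix: Hermitian positive semidefinite with unit trace. -/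
def IsDensity (ρ : Matrix (Fin d) (Fin d) ℂ) : Prop :=
  ρ.PosSemidef ∧ ρ.trace = 1

/-- A non-singular density matrix: positive definite with unit trace. -/
def IsNSDensity (ρ : Matrix (Fin d) (Fin d) ℂ) : Prop :=
  ρ.PosDef ∧ ρ.trace = 1

/-- Matrix logarithm via the spectral decomposition (junk value `0` if not Hermitian). -/
noncomputable def matLog (ρ : Matrix (Fin d) (Fin d) ℂ) : Matrix (Fin d) (Fin d) ℂ :=
  if h : ρ.IsHermitian then h.cfc Real.log else 0

/-- Real trace inner product of two (Hermitian) matrices: `Re tr (A B)`. -/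
noncomputable def hinner (A B : Matrix (Fin d) (Fin d) ℂ) : ℝ :=
  ((A * B).trace).re

/-- Quantum relative entropy `D(ρ,σ) = tr(ρ log ρ) − tr(ρ log σ) − tr(ρ − σ)`. -/
noncomputable def qRelEnt (ρ σ : Matrix (Fin d) (Fin d) ℂ) : ℝ :=
  ((ρ * matLog ρ).trace - (ρ * matLog σ).trace - (ρ - σ).trace).re

/-- The exponentiated-gradient (EG) update
`ρ(α) = exp(log ρ − α G) / tr exp(log ρ − α G)`. -/
noncomputable def egUpdate (ρ G : Matrix (Fin d) (Fin d) ℂ) (α : ℝ) :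
    Matrix (Fin d) (Fin d) ℂ :=
  ((NormedSpace.exp (matLog ρ - α • G)).trace)⁻¹ • NormedSpace.exp (matLog ρ - α • G)

/-- `f` has Hermitian gradient `g` at `ρ`: the derivative of `f` at `ρ` in any
Hermitian direction `X` equals `tr (g X)`. -/
def HasHermGradAt (f : Matrix (Fin d) (Fin d) ℂ → ℝ) (g ρ : Matrix (Fin d) (Fin d) ℂ) : Prop :=
  g.IsHermitian ∧ ∀ X : Matrix (Fin d) (Fin d) ℂ, X.IsHermitian →
    HasDerivAt (fun t : ℝ => f (ρ + t • X)) (hinner g X) 0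

/-- Largest eigenvalue of a Hermitian matrix (junk value if not Hermitian). -/
noncomputable def lamMax (G : Matrix (Fin d) (Fin d) ℂ) : ℝ :=
  if h : G.IsHermitian then ⨆ i, h.eigenvalues i else 0

/-- Smallest eigenvalue of a Hermitian matrix (junk value if not Hermitian). -/
noncomputable def lamMin (G : Matrix (Fin d) (Fin d) ℂ) : ℝ :=
  if h : G.IsHermitian then ⨅ i, h.eigenvalues i else 0

/-- The Armijo condition at `ρ` with step `a`, for objective `f` with gradient map `gradf`
and parameter `τ`. -/
def armijoCond (f : Matrix (Fin d) (Fin d) ℂ → ℝ)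
    (gradf : Matrix (Fin d) (Fin d) ℂ → Matrix (Fin d) (Fin d) ℂ)
    (τ : ℝ) (ρ : Matrix (Fin d) (Fin d) ℂ) (a : ℝ) : Prop :=
  f (egUpdate ρ (gradf ρ) a) ≤ f ρ + τ * hinner (gradf ρ) (egUpdate ρ (gradf ρ) a - ρ)

lemma isHermitian_trace_eq {A : Matrix (Fin d) (Fin d) ℂ} (hA : A.IsHermitian) :
    A.trace = ∑ i, (hA.eigenvalues i : ℂ) := by
  exact hA.trace_eq_sum_eigenvalues

lemma posDef_real_smul {M : Matrix (Fin d) (Fin d) ℂ} (hM : M.PosDef) {c : ℝ}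
    (hc : 0 < c) : ((c : ℂ) • M).PosDef := by
  refine ⟨?_, fun x hx => ?_⟩
  · have : star ((c : ℂ)) = (c : ℂ) := by simp [Complex.star_def, Complex.conj_ofReal]
    unfold Matrix.IsHermitian
    rw [Matrix.conjTranspose_smul, hM.1, this]
  · exact (hM.smul (Complex.zero_lt_real.mpr hc)).2 hx

lemma posSemidef_real_smul {M : Matrix (Fin d) (Fin d) ℂ} (hM : M.PosSemidef) {c : ℝ}
    (hc : 0 ≤ c) : ((c : ℂ) • M).PosSemidef := by
  refine ⟨?_, fun x => ?_⟩
  · have : star ((c : ℂ)) = (c : ℂ) := by simp [Complex.star_def, Complex.conj_ofReal]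
    unfold Matrix.IsHermitian
    rw [Matrix.conjTranspose_smul, hM.1, this]
  · exact (hM.smul (Complex.zero_le_real.mpr hc)).2 x

lemma nsd_det_re {σ : Matrix (Fin d) (Fin d) ℂ} (h : IsNSDensity σ) :
    0 < σ.det.re ∧ σ.det.re ≤ 1 := by
  have hherm := h.1.1
  have hre : σ.det.re = ∏ i, hherm.eigenvalues i := by
    rw [hherm.det_eq_prod_eigenvalues]
    norm_cast
  have hpos : ∀ i, 0 < hherm.eigenvalues i := fun i => h.1.eigenvalues_pos i
  have hsum : ∑ i, hherm.eigenvalues i = 1 := by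
    have := isHermitian_trace_eq hherm
    rw [h.2] at this
    have : ((∑ i, hherm.eigenvalues i : ℝ) : ℂ) = ((1:ℝ):ℂ) := by push_cast; rw [← this]
    exact_mod_cast this
  have hle1 : ∀ i, hherm.eigenvalues i ≤ 1 := by
    intro i
    rw [← hsum]
    exact Finset.single_le_sum (fun j _ => (hpos j).le) (Finset.mem_univ i)
  constructor
  · rw [hre]; exact Finset.prod_pos (fun i _ => hpos i)
  · rw [hre]; exact Finset.prod_le_one (fun i _ => (hpos i).le) (fun i _ => hle1 i)

noncomputable def muMat (d : ℕ) : Matrix (Fin d) (Fin d) ℂ :=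
  (((d : ℝ)⁻¹ : ℝ) : ℂ) • (1 : Matrix (Fin d) (Fin d) ℂ)

lemma mu_nsd [NeZero d] : IsNSDensity (muMat d) := by
  have hd : (0:ℝ) < d := Nat.cast_pos.mpr (Nat.pos_of_ne_zero (NeZero.ne d))
  constructor
  · exact posDef_real_smul Matrix.PosDef.one (by positivity)
  · rw [muMat, Matrix.trace_smul, Matrix.trace_one, smul_eq_mul]
    simp only [Fintype.card_fin]
    push_cast
    field_simp
    exact div_self (by exact_mod_cast hd.ne')

noncomputable def pathMat (ρ : Matrix (Fin d) (Fin d) ℂ) (t : ℝ) : Matrix (Fin d) (Fin d) ℂ :=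
  (((1 - t : ℝ)) : ℂ) • ρ + ((t : ℝ) : ℂ) • muMat d

lemma pathMat_zero (ρ : Matrix (Fin d) (Fin d) ℂ) : pathMat ρ 0 = ρ := by
  simp [pathMat]

lemma pathMat_continuous (ρ : Matrix (Fin d) (Fin d) ℂ) : Continuous (pathMat ρ) := by
  unfold pathMat
  fun_prop

lemma comb_nsd [NeZero d] {ρ : Matrix (Fin d) (Fin d) ℂ} (hρ : IsDensity ρ)
    {t : ℝ} (ht0 : 0 < t) (ht1 : t ≤ 1) : IsNSDensity (pathMat ρ t) := by
  constructor
  · exact Matrix.PosDef.posSemidef_add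
      (posSemidef_real_smul hρ.1 (by linarith))
      (posDef_real_smul mu_nsd.1 ht0)
  · rw [pathMat, Matrix.trace_add, Matrix.trace_smul, Matrix.trace_smul, hρ.2, mu_nsd.2]
    push_cast
    simp only [smul_eq_mul, mul_one]
    ring

/-- The optimal value of the log-det–regularized problem converges to the optimal value of
the original problem as the regularization parameter `λ ↓ 0`; equivalently the infimum over
`λ > 0` of the regularized optimal values equals `f*`. -/
theorem logdet_regularized_value_tendsto [NeZero d]
    (f : Matrix (Fin d) (Fin d) ℂ → ℝ)
    (hcont : ContinuousOn f {σ : Matrix (Fin d) (Fin d) ℂ | IsDensity σ})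
    (hbdd : BddBelow (f '' {σ : Matrix (Fin d) (Fin d) ℂ | IsDensity σ})) :
    Tendsto
      (fun lam : ℝ =>
        sInf ((fun σ => f σ - lam * Real.log σ.det.re) ''
          {σ : Matrix (Fin d) (Fin d) ℂ | IsNSDensity σ}))
      (nhdsWithin 0 (Set.Ioi 0))
      (𝓝 (sInf (f '' {σ : Matrix (Fin d) (Fin d) ℂ | IsDensity σ}))) ∧
    (⨅ lam : {x : ℝ // 0 < x},
        sInf ((fun σ => f σ - (lam : ℝ) * Real.log σ.det.re) ''
          {σ : Matrix (Fin d) (Fin d) ℂ | IsNSDensity σ})) =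
      sInf (f '' {σ : Matrix (Fin d) (Fin d) ℂ | IsDensity σ}) := by
  have hsub : ∀ {σ : Matrix (Fin d) (Fin d) ℂ}, IsNSDensity σ → IsDensity σ :=
    fun h => ⟨h.1.posSemidef, h.2⟩
  set M := sInf (f '' {σ : Matrix (Fin d) (Fin d) ℂ | IsDensity σ}) with hM
  have hMle : ∀ σ, IsDensity σ → M ≤ f σ := fun σ h => csInf_le hbdd ⟨σ, h, rfl⟩
  have hlow : ∀ lam : ℝ, 0 ≤ lam → ∀ y ∈ (fun σ => f σ - lam * Real.log σ.det.re) ''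
      {σ : Matrix (Fin d) (Fin d) ℂ | IsNSDensity σ}, M ≤ y := by
    rintro lam hlam y ⟨σ, hσ, rfl⟩
    have hd := nsd_det_re hσ
    have hlog : Real.log σ.det.re ≤ 0 := Real.log_nonpos hd.1.le hd.2
    have h1 : 0 ≤ -(lam * Real.log σ.det.re) := by nlinarith
    have h2 := hMle σ (hsub hσ)
    simp only
    linarith
  have himg_ne : ∀ lam : ℝ, ((fun σ => f σ - lam * Real.log σ.det.re) ''
      {σ : Matrix (Fin d) (Fin d) ℂ | IsNSDensity σ}).Nonempty :=
    fun lam => ⟨_, ⟨muMat d, mu_nsd, rfl⟩⟩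
  have hgM : ∀ lam : ℝ, 0 ≤ lam → M ≤ sInf ((fun σ => f σ - lam * Real.log σ.det.re) ''
      {σ : Matrix (Fin d) (Fin d) ℂ | IsNSDensity σ}) :=
    fun lam hlam => le_csInf (himg_ne lam) (hlow lam hlam)
  have key : ∀ ε : ℝ, 0 < ε → ∃ lam₀ : ℝ, 0 < lam₀ ∧ ∀ lam : ℝ, 0 < lam → lam < lam₀ →
      sInf ((fun σ => f σ - lam * Real.log σ.det.re) ''
        {σ : Matrix (Fin d) (Fin d) ℂ | IsNSDensity σ}) < M + ε := by
    intro ε hε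
    have hne : (f '' {σ : Matrix (Fin d) (Fin d) ℂ | IsDensity σ}).Nonempty :=
      ⟨_, ⟨muMat d, hsub mu_nsd, rfl⟩⟩
    obtain ⟨y, ⟨ρ, hρ, rfl⟩, hy⟩ := exists_lt_of_csInf_lt hne (show M < M + ε/3 by linarith)
    have hcw : ContinuousWithinAt f {σ : Matrix (Fin d) (Fin d) ℂ | IsDensity σ} ρ := hcont ρ hρ
    have hpath : Tendsto (pathMat ρ) (𝓝[Set.Ioc (0:ℝ) 1] 0)
        (𝓝[{σ : Matrix (Fin d) (Fin d) ℂ | IsDensity σ}] ρ) := by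
      rw [tendsto_nhdsWithin_iff]
      constructor
      · have h1 := ((pathMat_continuous ρ).tendsto 0).mono_left
          (nhdsWithin_le_nhds : 𝓝[Set.Ioc (0:ℝ) 1] 0 ≤ 𝓝 0)
        rwa [pathMat_zero] at h1
      · filter_upwards [self_mem_nhdsWithin] with t ht
        exact hsub (comb_nsd hρ ht.1 ht.2)
    have hft : Tendsto (fun t => f (pathMat ρ t)) (𝓝[Set.Ioc (0:ℝ) 1] 0) (𝓝 (f ρ)) :=
      hcw.tendsto.comp hpath
    have hnb : (𝓝[Set.Ioc (0:ℝ) 1] (0:ℝ)).NeBot := by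
      apply mem_closure_iff_nhdsWithin_neBot.mp
      rw [closure_Ioc (by norm_num : (0:ℝ) ≠ 1)]
      exact ⟨le_refl 0, by norm_num⟩
    have hev : ∀ᶠ t in 𝓝[Set.Ioc (0:ℝ) 1] (0:ℝ), f (pathMat ρ t) < M + 2*ε/3 :=
      hft.eventually_lt_const (by linarith)
    obtain ⟨t, hft2, ht⟩ := (hev.and (eventually_mem_nhdsWithin)).exists
    set σ := pathMat ρ t with hσdef
    have hσ : IsNSDensity σ := comb_nsd hρ ht.1 ht.2
    set C := -Real.log σ.det.re with hC
    have hC0 : 0 ≤ C := by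
      have hd := nsd_det_re hσ
      have := Real.log_nonpos hd.1.le hd.2
      simp only [hC]
      linarith
    refine ⟨(ε/3)/(C+1), by positivity, fun lam hlam hlam' => ?_⟩
    have hle : sInf ((fun σ => f σ - lam * Real.log σ.det.re) ''
        {σ : Matrix (Fin d) (Fin d) ℂ | IsNSDensity σ}) ≤ f σ - lam * Real.log σ.det.re :=
      csInf_le ⟨M, hlow lam hlam.le⟩ ⟨σ, hσ, rfl⟩
    have heq : f σ - lam * Real.log σ.det.re = f σ + lam * C := by rw [hC]; ring
    have hlamC : lam * C < ε/3 := by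
      have h1 : lam * C ≤ lam * (C+1) := by nlinarith
      have h2 : lam * (C+1) < ((ε/3)/(C+1)) * (C+1) := by
        apply mul_lt_mul_of_pos_right hlam'
        positivity
      have h3 : ((ε/3)/(C+1)) * (C+1) = ε/3 := by field_simp
      linarith
    rw [heq] at hle
    linarith
  constructor
  · rw [tendsto_order]
    constructor
    · intro a ha
      filter_upwards [self_mem_nhdsWithin] with lam hlam
      exact lt_of_lt_of_le ha (hgM lam (le_of_lt hlam))
    · intro a ha
      obtain ⟨lam₀, hlam₀, hkey⟩ := key (a - M) (by linarith)
      filter_upwards [Ioo_mem_nhdsGT_of_mem ⟨le_refl 0, hlam₀⟩] with lam hlam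
      have := hkey lam hlam.1 hlam.2
      linarith
  · apply le_antisymm
    · apply le_of_forall_pos_le_add
      intro ε hε
      obtain ⟨lam₀, hlam₀, hkey⟩ := key ε hε
      refine le_trans (ciInf_le ?_ ⟨lam₀/2, by positivity⟩) ?_
      · refine ⟨M, ?_⟩
        rintro y ⟨lam, rfl⟩
        exact hgM lam lam.2.le
      · exact (hkey (lam₀/2) (by positivity) (by linarith)).le
    · exact le_ciInf fun lam => hgM lam lam.2.le
end

section
/- For every L > 0, the function t ↦ L·(t·Real.log t + (1−t)·Real.log(1−t) − 1) + Real.log t + Real.log(1−t) is not convex on the open interval (0,1). Equivalently, the quantum state tomography loss restricted to diagonal 2×2 density matrices, g(t) = −log t − log(1−t), is not L-smooth relative to the negative entropy h(t) = t log t + (1−t) log(1−t) − 1 for any L > 0: L·h − g is never convex. -/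
/-- For `t > 0`, `log t ≥ 1 - t⁻¹`. -/
lemma aux_log_ge (t : ℝ) (ht : 0 < t) : 1 - t⁻¹ ≤ Real.log t := by
  have h := Real.log_le_sub_one_of_pos (show (0:ℝ) < t⁻¹ by positivity)
  rw [Real.log_inv] at h
  linarith

/-- For `0 < t`, `t * log t ≥ t - 1 ≥ -1`. -/
lemma aux_mul_log_ge (t : ℝ) (ht : 0 < t) : (-1 : ℝ) ≤ t * Real.log t := by
  have h := aux_log_ge t ht
  have h2 : t * (1 - t⁻¹) ≤ t * Real.log t :=
    mul_le_mul_of_nonneg_left h ht.le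
  have h3 : t * (1 - t⁻¹) = t - 1 := by field_simp
  linarith

lemma aux_mul_log_nonpos (t : ℝ) (ht : 0 < t) (ht1 : t ≤ 1) :
    t * Real.log t ≤ 0 :=
  mul_nonpos_of_nonneg_of_nonpos ht.le (Real.log_nonpos ht.le ht1)

/-- For every `L > 0`, the function `t ↦ L·(t log t + (1−t) log(1−t) − 1) + log t + log(1−t)`
(i.e. `L·h − g` where `g(t) = −log t − log(1−t)` is the two-dimensional quantum state
tomography loss and `h` the negative entropy) is not convex on `(0,1)`:
`g` is not `L`-smooth relative to `h` for any `L > 0`. -/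
theorem qst_not_relatively_smooth :
    ∀ L > (0 : ℝ),
      ¬ ConvexOn ℝ (Set.Ioo (0 : ℝ) 1)
        (fun t : ℝ =>
          L * (t * Real.log t + (1 - t) * Real.log (1 - t) - 1) +
            Real.log t + Real.log (1 - t)) := by
  intro L hL hconv
  set x : ℝ := Real.exp (-(6 * L + 9)) with hxdef
  have hx0 : 0 < x := Real.exp_pos _
  -- x ≤ 1/10
  have hxsmall : x ≤ 1 / 10 := by
    have h1 : (6 * L + 9) + 1 ≤ Real.exp (6 * L + 9) := Real.add_one_le_exp _
    have h2 : (10 : ℝ) ≤ Real.exp (6 * L + 9) := by linarith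
    have h3 : x = (Real.exp (6 * L + 9))⁻¹ := by
      rw [hxdef, Real.exp_neg]
    rw [h3]
    rw [inv_le_comm₀ (by positivity) (by norm_num)]
    linarith
  have hx1 : x < 1 := by linarith
  have hxmem : x ∈ Set.Ioo (0:ℝ) 1 := ⟨hx0, hx1⟩
  have hhmem : (1/2 : ℝ) ∈ Set.Ioo (0:ℝ) 1 := by norm_num
  have key := hconv.2 hxmem hhmem (by norm_num : (0:ℝ) ≤ 1/2)
    (by norm_num : (0:ℝ) ≤ 1/2) (by norm_num)
  simp only [smul_eq_mul] at key
  set m : ℝ := 1/2 * x + 1/2 * (1/2) with hmdef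
  clear_value m
  have hm_lb : 1/4 < m := by rw [hmdef]; linarith
  have hm_ub : m ≤ 3/10 := by rw [hmdef]; linarith
  have hm0 : 0 < m := by linarith
  have h1m0 : 0 < 1 - m := by linarith
  -- lower bound on f(m)
  have hlogm : (-3 : ℝ) ≤ Real.log m := by
    have h := aux_log_ge m hm0
    have : m⁻¹ ≤ 4 := by
      rw [inv_le_comm₀ hm0 (by norm_num)]
      linarith
    linarith
  have hlog1m : (-1 : ℝ) ≤ Real.log (1 - m) := by
    have h := aux_log_ge (1 - m) h1m0
    have : (1 - m)⁻¹ ≤ 2 := by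
      rw [inv_le_comm₀ h1m0 (by norm_num)]
      linarith
    linarith
  have hml1 := aux_mul_log_ge m hm0
  have hml2 := aux_mul_log_ge (1 - m) h1m0
  have hfm_lb : -3 * L - 4 ≤
      L * (m * Real.log m + (1 - m) * Real.log (1 - m) - 1) +
        Real.log m + Real.log (1 - m) := by
    have h1 : (-3 : ℝ) ≤ m * Real.log m + (1 - m) * Real.log (1 - m) - 1 := by
      linarith
    nlinarith [mul_le_mul_of_nonneg_left h1 hL.le]
  -- upper bound on f(x)
  have hlogx : Real.log x = -(6 * L + 9) := by rw [hxdef, Real.log_exp]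
  have hxl1 := aux_mul_log_nonpos x hx0 hx1.le
  have hxl2 := aux_mul_log_nonpos (1 - x) (by linarith) (by linarith)
  have hlog1x : Real.log (1 - x) ≤ 0 := Real.log_nonpos (by linarith) (by linarith)
  have hfx_ub : L * (x * Real.log x + (1 - x) * Real.log (1 - x) - 1) +
      Real.log x + Real.log (1 - x) ≤ -(6 * L + 9) := by
    nlinarith [mul_le_mul_of_nonneg_left (show x * Real.log x + (1 - x) * Real.log (1 - x) - 1 ≤ -1 by linarith) hL.le]
  -- upper bound on f(1/2)
  have hhl : (1/2 : ℝ) * Real.log (1/2) ≤ 0 := aux_mul_log_nonpos (1/2) (by norm_num) (by norm_num)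
  have hlogh : Real.log (1/2 : ℝ) ≤ 0 := Real.log_nonpos (by norm_num) (by norm_num)
  have hfh_ub : L * ((1/2 : ℝ) * Real.log (1/2) + (1 - 1/2) * Real.log (1 - 1/2) - 1) +
      Real.log (1/2 : ℝ) + Real.log (1 - 1/2 : ℝ) ≤ 0 := by
    norm_num
    nlinarith
  -- assemble contradiction
  linarith [key, hfm_lb, hfx_ub, hfh_ub]
end

section
/- Let ρ be a non-singular density matrix, G a Hermitian matrix, and define φ(α) := Real.log( tr( exp(log ρ − α·G) ) ) for α ∈ ℝ. Then φ is differentiable and for every α > 0, D(ρ(α), ρ) = φ(0) − φ(α) + α·φ'(α), where ρ(α) is the EG update at ρ with matrix G and step α and φ' denotes the derivative of φ. (Here φ(0) = 0 since tr ρ = 1.) -/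
open Matrix Filter
open scoped ComplexOrder Topology

variable {d : ℕ}

section EGAux

open Matrix NormedSpace Filter Finset Topology

variable {d : ℕ}

set_option maxHeartbeats 1000000 in
/-- Derivative of the trace of the exponential along a line of matrices. -/
lemma hasDerivAt_trace_exp (A B : Matrix (Fin d) (Fin d) ℂ) (t₀ : ℝ) :
    HasDerivAt (fun t : ℝ => (exp (A + t • B)).trace)
      ((exp (A + t₀ • B) * B).trace) t₀ := by
  letI : SeminormedRing (Matrix (Fin d) (Fin d) ℂ) := Matrix.linftyOpSemiNormedRing
  letI : NormedRing (Matrix (Fin d) (Fin d) ℂ) := Matrix.linftyOpNormedRing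
  letI : NormedAlgebra ℝ (Matrix (Fin d) (Fin d) ℂ) := Matrix.linftyOpNormedAlgebra
  letI : NormedAlgebra ℂ (Matrix (Fin d) (Fin d) ℂ) := Matrix.linftyOpNormedAlgebra
  letI : SeminormedAddCommGroup (Matrix (Fin d) (Fin d) ℂ →L[ℝ] ℂ) :=
    ContinuousLinearMap.toSeminormedAddCommGroup
  set M : ℝ → Matrix (Fin d) (Fin d) ℂ := fun t => A + t • B with hMdef
  have hM : ∀ t : ℝ, HasDerivAt M B t := fun t => by
    have h := ((hasDerivAt_id t).smul_const B).const_add A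
    simp only [id, one_smul] at h
    exact h
  have htr_cont : Continuous (fun X : Matrix (Fin d) (Fin d) ℂ => X.trace) := by
    have : (fun X : Matrix (Fin d) (Fin d) ℂ => X.trace) = fun X => ∑ i, X i i := rfl
    rw [this]
    exact continuous_finset_sum _ fun i _ => ((continuous_apply i).comp (continuous_apply i))
  let trL : Matrix (Fin d) (Fin d) ℂ →L[ℝ] ℂ :=
    ⟨(Matrix.traceLinearMap (Fin d) ℂ ℂ).restrictScalars ℝ, htr_cont⟩
  let trB : Matrix (Fin d) (Fin d) ℂ →L[ℝ] ℂ :=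
    ⟨((Matrix.traceLinearMap (Fin d) ℂ ℂ).comp (LinearMap.mulRight ℂ B)).restrictScalars ℝ,
      htr_cont.comp (by
        have : Continuous (fun X : Matrix (Fin d) (Fin d) ℂ => X * B) :=
          continuous_id.mul continuous_const
        exact this)⟩
  have htrL : ∀ X, trL X = X.trace := fun _ => rfl
  have htrB : ∀ X, trB X = (X * B).trace := fun _ => rfl
  have hpow : ∀ (n : ℕ) (t : ℝ), HasDerivAt (fun s => M s ^ (n + 1))
      (∑ k ∈ range (n + 1), M t ^ k * B * M t ^ (n - k)) t := by
    intro n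
    induction n with
    | zero => intro t; simpa using hM t
    | succ n ih =>
      intro t
      have h := (ih t).mul (hM t)
      change HasDerivAt (fun s => M s ^ (n + 1) * M s) _ t at h
      have he : (fun s => M s ^ (n + 1) * M s) = fun s => M s ^ (n + 2) := by
        funext s; rw [← pow_succ]
      rw [he] at h
      convert h using 1
      rw [sum_range_succ, sum_mul]
      congr 1
      · apply Finset.sum_congr rfl
        intro k hk
        have hk' : k ≤ n := Nat.lt_succ_iff.mp (mem_range.mp hk)
        rw [Nat.succ_sub hk', pow_succ]
        simp [mul_assoc]
      · simp [pow_succ]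
  have htrpow : ∀ (n : ℕ) (t : ℝ), HasDerivAt (fun s => (M s ^ (n + 1)).trace)
      (((n : ℂ) + 1) * (M t ^ n * B).trace) t := by
    intro n t
    have h := trL.hasFDerivAt.comp_hasDerivAt t (hpow n t)
    change HasDerivAt (fun s => (M s ^ (n + 1)).trace)
      (∑ k ∈ range (n + 1), M t ^ k * B * M t ^ (n - k)).trace t at h
    convert h using 1
    rw [eq_comm]
    have : ∀ k ∈ range (n + 1), (M t ^ k * B * M t ^ (n - k)).trace = (M t ^ n * B).trace := by
      intro k hk
      have hk' : k ≤ n := Nat.lt_succ_iff.mp (mem_range.mp hk)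
      rw [Matrix.trace_mul_cycle, ← pow_add, Nat.sub_add_cancel hk']
    rw [Matrix.trace_sum, Finset.sum_congr rfl this, Finset.sum_const, card_range, nsmul_eq_mul]
    push_cast
    ring
  set f : ℕ → ℝ → ℂ := fun n t => (n.factorial : ℂ)⁻¹ • (M t ^ n).trace with hfdef
  set f' : ℕ → ℝ → ℂ := fun n t =>
    (n.factorial : ℂ)⁻¹ • ((n : ℂ) * (M t ^ (n - 1) * B).trace) with hf'def
  have hfderiv : ∀ (n : ℕ) (t : ℝ), HasDerivAt (f n) (f' n t) t := by
    intro n t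
    match n with
    | 0 => simpa [hfdef, hf'def] using
        hasDerivAt_const t ((1 : ℂ)⁻¹ • (1 : Matrix (Fin d) (Fin d) ℂ)).trace
    | (n + 1) =>
      have h := (htrpow n t).const_smul (((n + 1).factorial : ℂ)⁻¹)
      convert h using 1
      · rfl
      · rfl
      simp only [hf'def]
      push_cast
      ring_nf
  set K : ℝ := max 1 ‖(1 : Matrix (Fin d) (Fin d) ℂ)‖ with hKdef
  have hK1 : (1 : ℝ) ≤ K := le_max_left _ _
  set R : ℝ := ‖A‖ + (|t₀| + 1) * ‖B‖ with hRdef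
  have hR0 : 0 ≤ R := by positivity
  set s : Set ℝ := Metric.ball t₀ 1 with hsdef
  have hts : t₀ ∈ s := Metric.mem_ball_self one_pos
  have hMb : ∀ t ∈ s, ‖M t‖ ≤ R := by
    intro t ht
    have h1 : |t - t₀| < 1 := by simpa [hsdef, Real.dist_eq] using ht
    have h2 : |t| ≤ |t₀| + 1 := by
      have := abs_add_le t₀ (t - t₀)
      simp only [add_sub_cancel] at this
      linarith [abs_nonneg (t - t₀)]
    calc ‖A + t • B‖ ≤ ‖A‖ + ‖t • B‖ := norm_add_le _ _
      _ = ‖A‖ + |t| * ‖B‖ := by rw [norm_smul, Real.norm_eq_abs]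
      _ ≤ R := by rw [hRdef]; gcongr
  have hMp : ∀ t ∈ s, ∀ k : ℕ, ‖M t ^ k‖ ≤ K * R ^ k := by
    intro t ht k
    match k with
    | 0 => rw [pow_zero, pow_zero, mul_one]; exact le_max_right _ _
    | (k + 1) =>
      calc ‖M t ^ (k + 1)‖ ≤ ‖M t‖ ^ (k + 1) := norm_pow_le' _ k.succ_pos
        _ ≤ R ^ (k + 1) := pow_le_pow_left₀ (norm_nonneg _) (hMb t ht) _
        _ ≤ K * R ^ (k + 1) := le_mul_of_one_le_left (by positivity) hK1
  set u : ℕ → ℝ := fun n => ‖trB‖ * K * R ^ (n - 1) / (n - 1).factorial with hudef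
  have hu : Summable u := by
    rw [← summable_nat_add_iff 1]
    have : (fun n => u (n + 1)) = fun n => ‖trB‖ * K * (R ^ n / n.factorial) := by
      funext n; simp [hudef, mul_div_assoc]
    rw [this]
    exact (Real.summable_pow_div_factorial R).mul_left _
  have hbound : ∀ (n : ℕ), ∀ t ∈ s, ‖f' n t‖ ≤ u n := by
    intro n t ht
    match n with
    | 0 =>
      have : f' 0 t = 0 := by simp [hf'def]
      rw [this, norm_zero, hudef]
      positivity
    | (n + 1) =>
      have h1 : ‖f' (n + 1) t‖
          = ((n + 1).factorial : ℝ)⁻¹ * (((n : ℝ) + 1) * ‖(M t ^ n * B).trace‖) := by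
        have e1 : ‖(((n + 1).factorial : ℂ))⁻¹‖ = ((n + 1).factorial : ℝ)⁻¹ := by
          rw [norm_inv, Complex.norm_natCast]
        have e2 : ‖((n + 1 : ℕ) : ℂ)‖ = ((n : ℝ) + 1) := by
          rw [Complex.norm_natCast]; push_cast; ring
        simp only [hf'def, norm_smul, norm_mul, Nat.add_sub_cancel]
        push_cast at e2 ⊢
        rw [e1, e2]
      have h2 : ‖(M t ^ n * B).trace‖ ≤ ‖trB‖ * (K * R ^ n) := by
        calc ‖(M t ^ n * B).trace‖ = ‖trB (M t ^ n)‖ := by rw [htrB]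
          _ ≤ ‖trB‖ * ‖M t ^ n‖ := trB.le_opNorm _
          _ ≤ ‖trB‖ * (K * R ^ n) := mul_le_mul_of_nonneg_left (hMp t ht n) (norm_nonneg _)
      have h3 : u (n + 1)
          = ((n + 1).factorial : ℝ)⁻¹ * (((n : ℝ) + 1) * (‖trB‖ * (K * R ^ n))) := by
        rw [hudef]
        simp only [Nat.add_sub_cancel, Nat.factorial_succ]
        push_cast
        have hf : ((n.factorial : ℝ)) ≠ 0 := by positivity
        field_simp
      rw [h1, h3]
      exact mul_le_mul_of_nonneg_left (mul_le_mul_of_nonneg_left h2 (by positivity))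
        (by positivity)
  have hTU : TendstoUniformlyOn (fun N t => ∑ n ∈ range N, f' n t)
      (fun t => ∑' n, f' n t) atTop s :=
    tendstoUniformlyOn_tsum_nat hu fun n t ht => hbound n t ht
  have hFd : ∀ᶠ N in (atTop : Filter ℕ), ∀ t ∈ s,
      HasDerivAt (fun t => ∑ n ∈ range N, f n t) (∑ n ∈ range N, f' n t) t :=
    Filter.Eventually.of_forall fun N t _ => HasDerivAt.fun_sum fun n _ => hfderiv n t
  have hexp_eq : ∀ t : ℝ, HasSum (fun n => f n t) ((exp (M t)).trace) := by
    intro t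
    have hsum : Summable fun n => ((n.factorial : ℂ))⁻¹ • M t ^ n :=
      expSeries_summable' (𝕂 := ℂ) (M t)
    have h := hsum.hasSum.mapL trL
    have hexp : exp (M t) = ∑' n : ℕ, ((n.factorial : ℂ))⁻¹ • M t ^ n := by
      rw [exp_eq_tsum ℂ]
    rw [← hexp] at h
    convert h using 2 with n
    simp [hfdef, htrL, Matrix.trace_smul]
    exact (htrL _).symm
  have hFg : ∀ t ∈ s, Tendsto (fun N => ∑ n ∈ range N, f n t) atTop
      (𝓝 ((exp (M t)).trace)) := fun t _ => (hexp_eq t).tendsto_sum_nat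
  have hmain : HasDerivAt (fun t => (exp (M t)).trace) (∑' n, f' n t₀) t₀ :=
    hasDerivAt_of_tendstoUniformlyOn Metric.isOpen_ball hTU hFd hFg hts
  have hs' : Summable fun n => f' n t₀ :=
    Summable.of_norm_bounded hu fun n => hbound n t₀ hts
  have hder : (∑' n, f' n t₀) = (exp (M t₀) * B).trace := by
    rw [hs'.tsum_eq_zero_add]
    have h0 : f' 0 t₀ = 0 := by simp [hf'def]
    have hshift : ∀ n : ℕ, f' (n + 1) t₀ = ((n.factorial : ℂ))⁻¹ • (M t₀ ^ n * B).trace := by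
      intro n
      simp only [hf'def, Nat.add_sub_cancel, smul_eq_mul, Nat.factorial_succ]
      have hne : ((n : ℂ) + 1) ≠ 0 := by
        exact_mod_cast Nat.cast_add_one_ne_zero (R := ℂ) n
      have hnf : ((n.factorial : ℂ)) ≠ 0 := by exact_mod_cast Nat.factorial_ne_zero n
      push_cast
      field_simp
    rw [h0, zero_add]
    have hsum : Summable fun n => ((n.factorial : ℂ))⁻¹ • M t₀ ^ n :=
      expSeries_summable' (𝕂 := ℂ) (M t₀)
    have hB := hsum.hasSum.mapL trB
    have hexp : exp (M t₀) = ∑' n : ℕ, ((n.factorial : ℂ))⁻¹ • M t₀ ^ n := by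
      rw [exp_eq_tsum ℂ]
    rw [← hexp] at hB
    have : ∀ n : ℕ, trB (((n.factorial : ℂ))⁻¹ • M t₀ ^ n)
        = ((n.factorial : ℂ))⁻¹ • (M t₀ ^ n * B).trace := by
      intro n
      rw [htrB, smul_mul_assoc, Matrix.trace_smul]
    calc (∑' n, f' (n + 1) t₀) = ∑' n, trB (((n.factorial : ℂ))⁻¹ • M t₀ ^ n) := by
          exact tsum_congr fun n => by rw [hshift n, this n]
      _ = (exp (M t₀) * B).trace := by rw [hB.tsum_eq, htrB]
  rw [hder] at hmain
  exact hmain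

/-- Every real function is continuous on a finite set. -/
lemma contOn_fin {f : ℝ → ℝ} {s : Set ℝ} (hs : s.Finite) : ContinuousOn f s := by
  rw [continuousOn_iff_continuous_restrict]
  have : Finite s := hs
  exact continuous_of_discreteTopology

/-- The exponential of a Hermitian matrix via the continuous functional calculus. -/
lemma exp_eq_cfc {A : Matrix (Fin d) (Fin d) ℂ} (hA : A.IsHermitian) :
    NormedSpace.exp A = cfc Real.exp A := by
  rw [hA.cfc_eq, Matrix.IsHermitian.cfc, Unitary.conjStarAlgAut_apply]
  conv_lhs => rw [hA.spectral_theorem, Unitary.conjStarAlgAut_apply]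
  have hu : IsUnit (hA.eigenvectorUnitary : Matrix (Fin d) (Fin d) ℂ) :=
    (Unitary.toUnits hA.eigenvectorUnitary).isUnit
  have hinv : (hA.eigenvectorUnitary : Matrix (Fin d) (Fin d) ℂ)⁻¹
      = (star hA.eigenvectorUnitary : Matrix (Fin d) (Fin d) ℂ) :=
    Matrix.inv_eq_right_inv (Unitary.coe_mul_star_self _)
  rw [← hinv, Matrix.exp_conj _ _ hu, Matrix.exp_diagonal]
  have : exp (RCLike.ofReal ∘ hA.eigenvalues : Fin d → ℂ)
      = RCLike.ofReal ∘ Real.exp ∘ hA.eigenvalues := by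
    funext i
    rw [Pi.coe_exp]
    simp [← Complex.exp_eq_exp_ℂ, ← Complex.ofReal_exp]
  rw [this]

/-- Trace of a matrix function of a Hermitian matrix. -/
lemma trace_cfc {A : Matrix (Fin d) (Fin d) ℂ} (hA : A.IsHermitian) (f : ℝ → ℝ) :
    (cfc f A).trace = ((∑ i, f (hA.eigenvalues i) : ℝ) : ℂ) := by
  rw [hA.cfc_eq, Matrix.IsHermitian.cfc, Unitary.conjStarAlgAut_apply, Matrix.trace_mul_cycle]
  have h1 : (star hA.eigenvectorUnitary : Matrix (Fin d) (Fin d) ℂ)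
      * (hA.eigenvectorUnitary : Matrix (Fin d) (Fin d) ℂ) = 1 :=
    Unitary.coe_star_mul_self _
  rw [h1, one_mul, Matrix.trace_diagonal]
  push_cast
  rfl

lemma ofReal_smul_mat (r : ℝ) (X : Matrix (Fin d) (Fin d) ℂ) :
    ((r : ℂ)) • X = r • X := by
  ext i j
  simp [Complex.real_smul]

end EGAux

/-- The relative entropy between the EG update and the current iterate is expressible via the
log-partition function: `D(ρ(α), ρ) = φ(0) − φ(α) + α·φ'(α)`. -/
theorem eg_divergence_eq_logpartition [NeZero d]
    (ρ G : Matrix (Fin d) (Fin d) ℂ) (hρ : IsNSDensity ρ) (hG : G.IsHermitian)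
    (φ : ℝ → ℝ)
    (hφ : ∀ a : ℝ, φ a = Real.log ((NormedSpace.exp (matLog ρ - a • G)).trace.re)) :
    (∀ α : ℝ, DifferentiableAt ℝ φ α) ∧
      ∀ α > (0 : ℝ), qRelEnt (egUpdate ρ G α) ρ = φ 0 - φ α + α * deriv φ α := by
  classical
  obtain ⟨hρpd, hρtr⟩ := hρ
  have hρh : ρ.IsHermitian := hρpd.1
  haveI : Nonempty (Fin d) := ⟨⟨0, Nat.pos_of_ne_zero (NeZero.ne d)⟩⟩
  have hmatLog : ∀ (A : Matrix (Fin d) (Fin d) ℂ) (hA : A.IsHermitian),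
      matLog A = cfc Real.log A := by
    intro A hA
    rw [matLog, dif_pos hA, ← hA.cfc_eq]
  have hL : (matLog ρ).IsHermitian := by
    rw [hmatLog ρ hρh]
    exact cfc_predicate Real.log ρ
  have hH : ∀ a : ℝ, (matLog ρ - a • G).IsHermitian := by
    intro a
    have h1 : IsSelfAdjoint G := hG
    exact hL.sub ((IsSelfAdjoint.all a).smul h1)
  have hkey : ∀ a : ℝ, NormedSpace.exp (matLog ρ - a • G)
      = cfc Real.exp (matLog ρ - a • G) := fun a => exp_eq_cfc (hH a)
  have hZtr : ∀ a : ℝ, (NormedSpace.exp (matLog ρ - a • G)).trace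
      = ((∑ i, Real.exp ((hH a).eigenvalues i) : ℝ) : ℂ) := by
    intro a
    rw [hkey a, trace_cfc (hH a) Real.exp]
  have hZre : ∀ a : ℝ, (NormedSpace.exp (matLog ρ - a • G)).trace.re
      = ∑ i, Real.exp ((hH a).eigenvalues i) := by
    intro a; rw [hZtr a, Complex.ofReal_re]
  have hZpos : ∀ a : ℝ, 0 < ∑ i, Real.exp ((hH a).eigenvalues i) := fun a =>
    Finset.sum_pos (fun i _ => Real.exp_pos _) Finset.univ_nonempty
  have hZrepos : ∀ a : ℝ, 0 < (NormedSpace.exp (matLog ρ - a • G)).trace.re := by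
    intro a; rw [hZre a]; exact hZpos a
  -- derivative of the partition function
  have hderiv : ∀ a : ℝ, HasDerivAt
      (fun t : ℝ => (NormedSpace.exp (matLog ρ - t • G)).trace.re)
      (-((NormedSpace.exp (matLog ρ - a • G) * G).trace.re)) a := by
    intro a
    have h := hasDerivAt_trace_exp (matLog ρ) (-G) a
    simp only [smul_neg, ← sub_eq_add_neg] at h
    have h2 := Complex.reCLM.hasFDerivAt.comp_hasDerivAt a h
    simpa [mul_neg, Matrix.trace_neg, Function.comp_def] using h2
  have hφeq : φ = fun t => Real.log ((NormedSpace.exp (matLog ρ - t • G)).trace.re) :=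
    funext hφ
  have hφd : ∀ a : ℝ, HasDerivAt φ
      (-((NormedSpace.exp (matLog ρ - a • G) * G).trace.re)
        / (NormedSpace.exp (matLog ρ - a • G)).trace.re) a := by
    intro a
    rw [hφeq]
    exact (hderiv a).log (hZrepos a).ne'
  refine ⟨fun α => (hφd α).differentiableAt, ?_⟩
  intro α hα
  set Zr : ℝ := (NormedSpace.exp (matLog ρ - α • G)).trace.re with hZrdef
  have hZrpos : 0 < Zr := hZrepos α
  have hZtrα : (NormedSpace.exp (matLog ρ - α • G)).trace = ((Zr : ℝ) : ℂ) := by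
    rw [hZrdef, hZre α, ← hZtr α]
  have hZrne : ((Zr : ℝ) : ℂ) ≠ 0 := by exact_mod_cast hZrpos.ne'
  -- the EG update as a cfc of `matLog ρ - α • G`
  have hσ : egUpdate ρ G α = cfc (fun x => Zr⁻¹ * Real.exp x) (matLog ρ - α • G) := by
    rw [egUpdate, hZtrα, hkey α, ← Complex.ofReal_inv, ofReal_smul_mat,
      ← cfc_smul (Zr⁻¹ : ℝ) Real.exp (matLog ρ - α • G)
        (contOn_fin (matLog ρ - α • G).finite_real_spectrum)]
    simp [smul_eq_mul]
  have hσh : (egUpdate ρ G α).IsHermitian := by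
    rw [hσ]; exact cfc_predicate _ _
  have hσtrace : (egUpdate ρ G α).trace = 1 := by
    rw [egUpdate, Matrix.trace_smul, hZtrα, smul_eq_mul, inv_mul_cancel₀ hZrne]
  -- matrix logarithm of the EG update
  have hlogσ : matLog (egUpdate ρ G α)
      = (matLog ρ - α • G) - (Real.log Zr) • (1 : Matrix (Fin d) (Fin d) ℂ) := by
    have hcomp := cfc_comp Real.log (fun x => Zr⁻¹ * Real.exp x) (matLog ρ - α • G) (hH α)
      (contOn_fin (((matLog ρ - α • G).finite_real_spectrum).image _))
      (contOn_fin (matLog ρ - α • G).finite_real_spectrum)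
    rw [hmatLog _ hσh, hσ, ← hcomp]
    have hfun : (Real.log ∘ fun x => Zr⁻¹ * Real.exp x) = fun x => x - Real.log Zr := by
      funext x
      simp only [Function.comp_apply]
      rw [Real.log_mul (inv_ne_zero hZrpos.ne') (Real.exp_ne_zero x), Real.log_inv,
        Real.log_exp]
      ring
    have hid := cfc_id' ℝ (matLog ρ - α • G) (hH α)
    have hconst := cfc_const (Real.log Zr) (matLog ρ - α • G) (hH α)
    rw [hfun,
      cfc_sub (fun x => x) (fun _ => Real.log Zr) (matLog ρ - α • G)
        (contOn_fin (matLog ρ - α • G).finite_real_spectrum)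
        (contOn_fin (matLog ρ - α • G).finite_real_spectrum),
      hid, hconst, Algebra.algebraMap_eq_smul_one]
  -- `exp (matLog ρ) = ρ`
  have hexpL : NormedSpace.exp (matLog ρ - (0 : ℝ) • G) = ρ := by
    rw [hkey 0]
    simp only [zero_smul, sub_zero]
    have hcomp := cfc_comp Real.exp Real.log ρ hρh
      (contOn_fin ((ρ.finite_real_spectrum).image _))
      (contOn_fin ρ.finite_real_spectrum)
    rw [hmatLog ρ hρh, ← hcomp]
    have : Set.EqOn (Real.exp ∘ Real.log) (fun x => x) (spectrum ℝ ρ) := by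
      intro x hx
      rw [hρh.spectrum_real_eq_range_eigenvalues] at hx
      obtain ⟨i, rfl⟩ := hx
      simp [Real.exp_log (hρpd.eigenvalues_pos i)]
    rw [cfc_congr this]
    exact cfc_id' ℝ ρ hρh
  have hφ0 : φ 0 = 0 := by
    rw [hφ 0, hexpL, hρtr]
    simp
  have hφα : φ α = Real.log Zr := by rw [hφ α]
  have hderivφ : deriv φ α
      = -((NormedSpace.exp (matLog ρ - α • G) * G).trace.re) / Zr := (hφd α).deriv
  -- trace computations
  have computeG : (egUpdate ρ G α * G).trace
      = ((Zr : ℝ) : ℂ)⁻¹ * ((NormedSpace.exp (matLog ρ - α • G) * G).trace) := by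
    rw [egUpdate, smul_mul_assoc, Matrix.trace_smul, hZtrα, smul_eq_mul]
  have compute1 : (egUpdate ρ G α * matLog (egUpdate ρ G α)).trace
      = (egUpdate ρ G α * (matLog ρ - α • G)).trace - ((Real.log Zr : ℝ) : ℂ) := by
    rw [hlogσ, mul_sub, Matrix.mul_smul, mul_one, Matrix.trace_sub, Matrix.trace_smul,
      hσtrace, Complex.real_smul, mul_one]
  have compute2 : (egUpdate ρ G α * matLog ρ).trace
      = (egUpdate ρ G α * (matLog ρ - α • G)).trace + ((α : ℝ) : ℂ) * (egUpdate ρ G α * G).trace := by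
    have hsplit : matLog ρ = (matLog ρ - α • G) + α • G := (sub_add_cancel _ _).symm
    conv_lhs => rw [hsplit]
    rw [mul_add, Matrix.trace_add, Matrix.mul_smul, Matrix.trace_smul, Complex.real_smul]
  have compute3 : (egUpdate ρ G α - ρ).trace = 0 := by
    rw [Matrix.trace_sub, hσtrace, hρtr, sub_self]
  -- put everything together
  have hre : ∀ (r : ℝ) (w : ℂ), (((r : ℝ) : ℂ) * w).re = r * w.re := by
    intro r w
    simp [Complex.mul_re]
  have hLHS : qRelEnt (egUpdate ρ G α) ρ
      = -(Real.log Zr) - α * ((NormedSpace.exp (matLog ρ - α • G) * G).trace.re / Zr) := by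
    rw [qRelEnt, compute1, compute2, compute3, computeG]
    have halg : (egUpdate ρ G α * (matLog ρ - α • G)).trace - ((Real.log Zr : ℝ) : ℂ)
          - ((egUpdate ρ G α * (matLog ρ - α • G)).trace
            + ((α : ℝ) : ℂ) * (((Zr : ℝ) : ℂ)⁻¹
              * (NormedSpace.exp (matLog ρ - α • G) * G).trace)) - 0
        = -(((Real.log Zr : ℝ) : ℂ))
          - ((α / Zr : ℝ) : ℂ) * (NormedSpace.exp (matLog ρ - α • G) * G).trace := by
      push_cast
      ring
    rw [halg]
    rw [Complex.sub_re, Complex.neg_re, Complex.ofReal_re, hre]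
    ring
  rw [hLHS, hφ0, hφα, hderivφ]
  field_simp
  ring
end

section
/- Let ρ be a non-singular density matrix, let f be convex on the set of density matrices and differentiable at ρ with Hermitian gradient ∇f(ρ), and let ρ(α) denote the EG update at ρ with G = ∇f(ρ). Then: (i) if ρ minimizes f over the set of density matrices, then ρ(α) = ρ for all α ≥ 0; and (ii) if ρ(α) = ρ for some α > 0, then ρ minimizes f over the set of density matrices. -/
open Matrix Filter
open scoped ComplexOrder Topology

variable {d : ℕ}

/- ============================ auxiliary lemmas ============================ -/

section Aux

attribute [local instance] Matrix.instL2OpNormedRing Matrix.instL2OpNormedAlgebra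

lemma matLog_eq_cfcLog {ρ : Matrix (Fin d) (Fin d) ℂ} (hρ : ρ.IsHermitian) :
    matLog ρ = CFC.log ρ := by
  rw [matLog, dif_pos hρ, CFC.log, hρ.cfc_eq]

lemma matLog_isHermitian {ρ : Matrix (Fin d) (Fin d) ℂ} (hρ : ρ.IsHermitian) :
    (matLog ρ).IsHermitian := by
  rw [matLog_eq_cfcLog hρ]
  exact IsSelfAdjoint.log

lemma real_smul_isHermitian {X : Matrix (Fin d) (Fin d) ℂ} (hX : X.IsHermitian) (t : ℝ) :
    (t • X).IsHermitian := by
  rw [Matrix.IsHermitian, Matrix.conjTranspose_smul, star_trivial, hX.eq]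

lemma exp_matLog {ρ : Matrix (Fin d) (Fin d) ℂ} (hρ : ρ.PosDef) :
    NormedSpace.exp (matLog ρ) = ρ := by
  rw [matLog_eq_cfcLog hρ.isHermitian]
  open scoped MatrixOrder in exact CFC.exp_log ρ hρ.isStrictlyPositive

lemma cfcLog_exp {A : Matrix (Fin d) (Fin d) ℂ} (hA : A.IsHermitian) :
    CFC.log (NormedSpace.exp A) = A := by
  exact CFC.log_exp A hA

lemma exp_add_smul_one (A : Matrix (Fin d) (Fin d) ℂ) (z : ℂ) :
    NormedSpace.exp (A + z • 1) = Complex.exp z • NormedSpace.exp A := by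
  rw [Matrix.exp_add_of_commute A (z • 1) ((Commute.one_right A).smul_right z),
    ← Algebra.algebraMap_eq_smul_one, ← NormedSpace.algebraMap_exp_comm,
    Algebra.algebraMap_eq_smul_one, Complex.exp_eq_exp_ℂ, mul_smul_comm, mul_one]

lemma trace_cfcH {A : Matrix (Fin d) (Fin d) ℂ} (hA : A.IsHermitian) (f : ℝ → ℝ) :
    (hA.cfc f).trace = ∑ i, (f (hA.eigenvalues i) : ℂ) := by
  rw [Matrix.IsHermitian.cfc, Unitary.conjStarAlgAut_apply, Matrix.trace_mul_cycle,
    Unitary.star_mul_self_of_mem hA.eigenvectorUnitary.prop, Matrix.one_mul,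
    Matrix.trace_diagonal]
  rfl

lemma trace_exp_herm {A : Matrix (Fin d) (Fin d) ℂ} (hA : A.IsHermitian) :
    (NormedSpace.exp A).trace = ((∑ i, Real.exp (hA.eigenvalues i) : ℝ) : ℂ) := by
  rw [← CFC.real_exp_eq_normedSpace_exp hA, hA.cfc_eq,
    trace_cfcH hA Real.exp]
  push_cast
  rfl

/-- The EG update for a scalar gradient is the identity. -/
lemma egUpdate_smul_one {ρ : Matrix (Fin d) (Fin d) ℂ} (hρ : IsNSDensity ρ) (μ α : ℝ) :
    egUpdate ρ ((μ : ℂ) • 1) α = ρ := by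
  have h1 : matLog ρ - α • ((μ : ℂ) • (1 : Matrix (Fin d) (Fin d) ℂ))
      = matLog ρ + ((-(α * μ) : ℝ) : ℂ) • 1 := by
    rw [sub_eq_add_neg]
    congr 1
    rw [← smul_assoc, ← neg_smul]
    congr 1
    simp [Complex.real_smul]
  rw [egUpdate, h1, exp_add_smul_one, exp_matLog hρ.1, Matrix.trace_smul, hρ.2, smul_eq_mul,
    mul_one, inv_smul_smul₀ (Complex.exp_ne_zero _)]

/-- If the EG update with positive step is a fixed point, the gradient is scalar. -/
lemma g_scalar_of_fixed {ρ g : Matrix (Fin d) (Fin d) ℂ} [NeZero d] (hρ : IsNSDensity ρ)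
    (hg : g.IsHermitian) {α : ℝ} (hα : 0 < α) (hfix : egUpdate ρ g α = ρ) :
    ∃ μ : ℝ, g = (μ : ℂ) • 1 := by
  have : Nonempty (Fin d) := Fin.pos_iff_nonempty.mp (NeZero.pos d)
  set H := matLog ρ - α • g with hHdef
  have hH : H.IsHermitian :=
    (matLog_isHermitian hρ.1.isHermitian).sub (real_smul_isHermitian hg α)
  set r : ℝ := ∑ i, Real.exp (hH.eigenvalues i) with hrdef
  have hrpos : 0 < r :=
    Finset.sum_pos (fun i _ => Real.exp_pos _) Finset.univ_nonempty
  have htr : (NormedSpace.exp H).trace = (r : ℂ) := trace_exp_herm hH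
  have hexpH : NormedSpace.exp H = (r : ℂ) • ρ := by
    have := hfix
    rw [egUpdate, ← hHdef, htr] at this
    rw [← this, smul_inv_smul₀ (by exact_mod_cast hrpos.ne')]
  set B := matLog ρ + ((Real.log r : ℝ) : ℂ) • 1 with hBdef
  have hB : B.IsHermitian := by
    refine (matLog_isHermitian hρ.1.isHermitian).add ?_
    rw [Matrix.IsHermitian, Matrix.conjTranspose_smul, Matrix.conjTranspose_one]
    norm_num
  have hexpB : NormedSpace.exp B = (r : ℂ) • ρ := by
    rw [hBdef, exp_add_smul_one, exp_matLog hρ.1, ← Complex.ofReal_exp, Real.exp_log hrpos]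
  have hHB : H = B := by
    rw [← cfcLog_exp hH, ← cfcLog_exp hB, hexpH, hexpB]
  have hsolve : α • g = ((-Real.log r : ℝ) : ℂ) • 1 := by
    have h2 : matLog ρ - α • g = matLog ρ + ((Real.log r : ℝ) : ℂ) • 1 := hHB
    have h3 : -(α • g) = ((Real.log r : ℝ) : ℂ) • 1 := by
      have := congrArg (fun M => M - matLog ρ) h2
      simpa [sub_eq_add_neg, add_comm, add_assoc, add_left_comm] using this
    rw [← neg_eq_iff_eq_neg.mpr h3.symm]
    push_cast
    rw [neg_smul]
  refine ⟨α⁻¹ * (-Real.log r), ?_⟩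
  have := congrArg (fun M => α⁻¹ • M) hsolve
  simp only [inv_smul_smul₀ hα.ne'] at this
  rw [this, ← smul_assoc]
  norm_num

lemma herm_qf_im (M : Matrix (Fin d) (Fin d) ℂ) (hM : M.IsHermitian) (x : Fin d → ℂ) :
    (star x ⬝ᵥ (M *ᵥ x)).im = 0 := by
  rw [← Complex.conj_eq_iff_im]
  have h1 : star x ⬝ᵥ (M *ᵥ x) = star (star (M *ᵥ x) ⬝ᵥ x) := Matrix.star_dotProduct _ _
  have h2 : star (M *ᵥ x) ⬝ᵥ x = star x ⬝ᵥ (M *ᵥ x) := by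
    rw [Matrix.star_mulVec, hM.eq, ← Matrix.dotProduct_mulVec]
  have h3 : star (star x ⬝ᵥ (M *ᵥ x)) = star x ⬝ᵥ (M *ᵥ x) := by
    conv_lhs => rw [h1, star_star, h2]
  simpa [Complex.star_def] using h3

lemma cfcH_posSemidef {A : Matrix (Fin d) (Fin d) ℂ} (hA : A.IsHermitian) (f : ℝ → ℝ)
    (hf : ∀ i, 0 ≤ f (hA.eigenvalues i)) : (hA.cfc f).PosSemidef := by
  rw [Matrix.IsHermitian.cfc]
  have hD : (Matrix.diagonal (RCLike.ofReal ∘ f ∘ hA.eigenvalues) :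
      Matrix (Fin d) (Fin d) ℂ).PosSemidef := by
    refine Matrix.PosSemidef.diagonal fun i => ?_
    simpa using Complex.zero_le_real.mpr (hf i)
  have := hD.mul_mul_conjTranspose_same (hA.eigenvectorUnitary : Matrix (Fin d) (Fin d) ℂ)
  simpa [Matrix.star_eq_conjTranspose] using this

lemma sub_smul_one_posSemidef {A : Matrix (Fin d) (Fin d) ℂ} (hA : A.IsHermitian) {c : ℝ}
    (hc : ∀ i, c ≤ hA.eigenvalues i) : (A - (c : ℂ) • 1).PosSemidef := by
  have key : A - (c : ℂ) • 1 = cfc (fun x : ℝ => x - c) A := by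
    rw [cfc_sub (fun x : ℝ => x) (fun _ => c) A (by fun_prop) (by fun_prop),
      cfc_id' ℝ A, cfc_const c A]
    norm_num [Algebra.algebraMap_eq_smul_one]
  rw [key, hA.cfc_eq]
  exact cfcH_posSemidef hA _ fun i => sub_nonneg.mpr (hc i)

lemma qf_bound (X : Matrix (Fin d) (Fin d) ℂ) (x : Fin d → ℂ) :
    |(star x ⬝ᵥ (X *ᵥ x)).re| ≤ (∑ i, ∑ j, ‖X i j‖) * ∑ i, Complex.normSq (x i) := by
  set s := ∑ i, Complex.normSq (x i) with hs
  have hsq : ∀ i, Complex.normSq (x i) = ‖x i‖ ^ 2 := fun i => by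
    rw [Complex.normSq_eq_norm_sq]
  have hxx : ∀ i j, ‖x i‖ * ‖x j‖ ≤ s := by
    intro i j
    have hi : ‖x i‖ ^ 2 ≤ s := by
      rw [hs, ← hsq i]
      exact Finset.single_le_sum (fun j _ => Complex.normSq_nonneg _) (Finset.mem_univ i)
    have hj : ‖x j‖ ^ 2 ≤ s := by
      rw [hs, ← hsq j]
      exact Finset.single_le_sum (fun j _ => Complex.normSq_nonneg _) (Finset.mem_univ j)
    nlinarith [sq_nonneg (‖x i‖ - ‖x j‖), norm_nonneg (x i), norm_nonneg (x j)]
  have hrw : star x ⬝ᵥ (X *ᵥ x) = ∑ i, ∑ j, star (x i) * (X i j * x j) := by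
    simp [dotProduct, Matrix.mulVec, Finset.mul_sum]
  calc |(star x ⬝ᵥ (X *ᵥ x)).re| ≤ ‖star x ⬝ᵥ (X *ᵥ x)‖ := Complex.abs_re_le_norm _
    _ = ‖∑ i, ∑ j, star (x i) * (X i j * x j)‖ := by rw [hrw]
    _ ≤ ∑ i, ∑ j, ‖star (x i) * (X i j * x j)‖ :=
        (norm_sum_le _ _).trans (Finset.sum_le_sum fun i _ => norm_sum_le _ _)
    _ ≤ ∑ i, ∑ j, ‖X i j‖ * s := by
        refine Finset.sum_le_sum fun i _ => Finset.sum_le_sum fun j _ => ?_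
        rw [norm_mul, norm_mul, norm_star]
        calc ‖x i‖ * (‖X i j‖ * ‖x j‖) = ‖X i j‖ * (‖x i‖ * ‖x j‖) := by ring
          _ ≤ ‖X i j‖ * s := mul_le_mul_of_nonneg_left (hxx i j) (norm_nonneg _)
    _ = (∑ i, ∑ j, ‖X i j‖) * s := by rw [Finset.sum_mul]; simp [Finset.sum_mul]

lemma star_dot_self (x : Fin d → ℂ) :
    star x ⬝ᵥ x = ((∑ i, Complex.normSq (x i) : ℝ) : ℂ) := by
  push_cast
  simp [dotProduct, Complex.normSq_eq_conj_mul_self]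

lemma eventually_posDef [NeZero d] (ρ X : Matrix (Fin d) (Fin d) ℂ) (hρ : ρ.PosDef)
    (hX : X.IsHermitian) : ∀ᶠ t : ℝ in 𝓝 0, (ρ + t • X).PosDef := by
  have : Nonempty (Fin d) := Fin.pos_iff_nonempty.mp (NeZero.pos d)
  set hH := hρ.isHermitian with hHdef
  set c : ℝ := Finset.univ.inf' Finset.univ_nonempty hH.eigenvalues with hc
  have hcpos : 0 < c := by
    rw [hc, Finset.lt_inf'_iff]
    exact fun i _ => hρ.eigenvalues_pos i
  set K : ℝ := ∑ i, ∑ j, ‖X i j‖ with hK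
  have hK0 : 0 ≤ K := Finset.sum_nonneg fun i _ => Finset.sum_nonneg fun j _ => norm_nonneg _
  have hPSD : (ρ - (c : ℂ) • 1).PosSemidef :=
    sub_smul_one_posSemidef hH fun i => Finset.inf'_le _ (Finset.mem_univ i)
  have hball : Set.Ioo (-(c / (K + 1))) (c / (K + 1)) ∈ 𝓝 (0 : ℝ) :=
    Ioo_mem_nhds (neg_lt_zero.mpr (by positivity)) (by positivity)
  filter_upwards [hball] with t ht
  have htabs : |t| * K < c := by
    have h1 : |t| < c / (K + 1) := abs_lt.mpr ⟨ht.1, ht.2⟩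
    have h2 : |t| * (K + 1) < c := by
      rw [← div_mul_cancel₀ c (by positivity : (K + 1) ≠ 0)]
      exact mul_lt_mul_of_pos_right h1 (by positivity)
    nlinarith [abs_nonneg t]
  have hherm : (ρ + t • X).IsHermitian := hH.add (real_smul_isHermitian hX t)
  refine Matrix.PosDef.of_dotProduct_mulVec_pos hherm fun x hx => ?_
  set s := ∑ i, Complex.normSq (x i) with hs
  have hspos : 0 < s := by
    obtain ⟨i, hi⟩ := Function.ne_iff.mp hx
    refine Finset.sum_pos' (fun j _ => Complex.normSq_nonneg _) ⟨i, Finset.mem_univ i, ?_⟩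
    exact Complex.normSq_pos.mpr hi
  have hrρ : c * s ≤ (star x ⬝ᵥ (ρ *ᵥ x)).re := by
    have h0 := hPSD.re_dotProduct_nonneg x
    have hexp : star x ⬝ᵥ ((ρ - (c : ℂ) • 1) *ᵥ x)
        = star x ⬝ᵥ (ρ *ᵥ x) - (c : ℂ) * ((s : ℝ) : ℂ) := by
      rw [Matrix.sub_mulVec, dotProduct_sub, Matrix.smul_mulVec,
        Matrix.one_mulVec, dotProduct_smul, star_dot_self, smul_eq_mul]
    have h0' : (0:ℝ) ≤ (star x ⬝ᵥ ((ρ - (c : ℂ) • 1) *ᵥ x)).re := h0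
    rw [hexp] at h0'
    have : (star x ⬝ᵥ (ρ *ᵥ x)).re - c * s ≥ 0 := by
      simpa [Complex.sub_re, Complex.mul_re] using h0'
    linarith
  have hXb : |(star x ⬝ᵥ (X *ᵥ x)).re| ≤ K * s := qf_bound X x
  have hqre : (star x ⬝ᵥ ((ρ + t • X) *ᵥ x)).re
      = (star x ⬝ᵥ (ρ *ᵥ x)).re + t * (star x ⬝ᵥ (X *ᵥ x)).re := by
    rw [Matrix.add_mulVec, dotProduct_add, Matrix.smul_mulVec,
      dotProduct_smul, Complex.add_re, Complex.smul_re, smul_eq_mul]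
  have hpos : 0 < (star x ⬝ᵥ ((ρ + t • X) *ᵥ x)).re := by
    rw [hqre]
    have hb : |t * (star x ⬝ᵥ (X *ᵥ x)).re| ≤ |t| * (K * s) := by
      rw [abs_mul]
      exact mul_le_mul_of_nonneg_left hXb (abs_nonneg t)
    have := neg_abs_le (t * (star x ⬝ᵥ (X *ᵥ x)).re)
    nlinarith [hspos, htabs]
  rw [Complex.lt_def]
  exact ⟨by simpa using hpos, by simpa using (herm_qf_im _ hherm x).symm⟩

lemma grad_ineq {f : Matrix (Fin d) (Fin d) ℂ → ℝ} {ρ g σ : Matrix (Fin d) (Fin d) ℂ}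
    (hconv : ConvexOn ℝ {σ : Matrix (Fin d) (Fin d) ℂ | IsDensity σ} f)
    (hρd : IsDensity ρ) (hg : HasHermGradAt f g ρ) (hσ : IsDensity σ) :
    f ρ + hinner g (σ - ρ) ≤ f σ := by
  have hX : (σ - ρ).IsHermitian := hσ.1.1.sub hρd.1.1
  have hder := hg.2 _ hX
  rw [hasDerivAt_iff_tendsto_slope] at hder
  have hder' : Tendsto (slope (fun t : ℝ => f (ρ + t • (σ - ρ))) 0) (𝓝[>] 0)
      (𝓝 (hinner g (σ - ρ))) :=
    hder.mono_left (nhdsWithin_mono 0 fun t ht => Set.mem_compl_singleton_iff.mpr (ne_of_gt ht))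
  have hbound : ∀ᶠ t in 𝓝[>] (0:ℝ),
      slope (fun t : ℝ => f (ρ + t • (σ - ρ))) 0 t ≤ f σ - f ρ := by
    filter_upwards [Ioc_mem_nhdsGT (zero_lt_one)] with t ht
    have hcomb : ρ + t • (σ - ρ) = (1 - t) • ρ + t • σ := by
      rw [smul_sub, sub_smul, one_smul]
      abel
    have hineq := hconv.2 hρd hσ (by linarith [ht.2] : (0:ℝ) ≤ 1 - t) (le_of_lt ht.1)
      (by ring : (1 - t) + t = 1)
    rw [slope_def_field]
    rw [div_le_iff₀ (by simpa using ht.1)]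
    have h0 : f (ρ + (0:ℝ) • (σ - ρ)) = f ρ := by simp
    rw [h0, hcomb]
    have ht2 : (0:ℝ) ≤ t := le_of_lt ht.1
    simp only [smul_eq_mul] at hineq
    nlinarith [hineq]
  linarith [le_of_tendsto hder' hbound]

lemma g_scalar_of_min [NeZero d] {f : Matrix (Fin d) (Fin d) ℂ → ℝ}
    {ρ g : Matrix (Fin d) (Fin d) ℂ} (hρ : IsNSDensity ρ) (hg : HasHermGradAt f g ρ)
    (hmin : ∀ σ, IsDensity σ → f ρ ≤ f σ) : ∃ μ : ℝ, g = (μ : ℂ) • 1 := by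
  have hd0 : (d : ℝ) ≠ 0 := Nat.cast_ne_zero.mpr (NeZero.ne d)
  have htrre : ((g.trace.re : ℂ)) = g.trace := by
    have h1 : star g.trace = g.trace := by
      rw [← Matrix.trace_conjTranspose, hg.1.eq]
    exact Complex.conj_eq_iff_re.mp h1
  set μ : ℝ := g.trace.re / d with hμ
  have hone : ((μ : ℂ) • (1 : Matrix (Fin d) (Fin d) ℂ)).IsHermitian := by
    rw [Matrix.IsHermitian, Matrix.conjTranspose_smul, Matrix.conjTranspose_one]
    norm_num
  set X := g - (μ : ℂ) • 1 with hXdef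
  have hX : X.IsHermitian := hg.1.sub hone
  have htrX : X.trace = 0 := by
    rw [hXdef, Matrix.trace_sub, Matrix.trace_smul, Matrix.trace_one, ← htrre]
    rw [smul_eq_mul, hμ]
    push_cast
    field_simp
    rw [Fintype.card_fin, div_self (Nat.cast_ne_zero.mpr (NeZero.ne d)), sub_self, mul_zero]
  have hev : ∀ᶠ t : ℝ in 𝓝 0, IsDensity (ρ + t • X) := by
    filter_upwards [eventually_posDef ρ X hρ.1 hX] with t ht
    refine ⟨ht.posSemidef, ?_⟩
    rw [Matrix.trace_add, Matrix.trace_smul, htrX, hρ.2]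
    simp
  have hlocal : IsLocalMin (fun t : ℝ => f (ρ + t • X)) 0 := by
    filter_upwards [hev] with t ht
    simpa using hmin _ ht
  have hzero : hinner g X = 0 := hlocal.hasDerivAt_eq_zero (hg.2 X hX)
  have hgeq : g = X + (μ : ℂ) • 1 := by rw [hXdef, sub_add_cancel]
  have h1 : ((X * X).trace).re = 0 := by
    have hmul : g * X = X * X + (μ : ℂ) • X := by
      rw [hgeq, Matrix.add_mul, Matrix.smul_mul, Matrix.one_mul]
    have : hinner g X = ((X * X).trace).re := by
      rw [hinner, hmul, Matrix.trace_add, Matrix.trace_smul, htrX, smul_zero, add_zero]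
    rw [← this, hzero]
  have h2 : (X * X).trace = ((∑ j, ∑ i, Complex.normSq (X i j) : ℝ) : ℂ) := by
    have hXX : X * X = Xᴴ * X := by rw [hX.eq]
    rw [hXX]
    push_cast
    rw [Matrix.trace]
    congr 1
    funext j
    rw [Matrix.diag_apply, Matrix.mul_apply]
    congr 1
    funext i
    rw [Matrix.conjTranspose_apply, Complex.normSq_eq_conj_mul_self]
    rfl
  have hXzero : X = 0 := by
    have hsum : (∑ j, ∑ i, Complex.normSq (X i j) : ℝ) = 0 := by
      have := h1
      rw [h2] at this
      simpa using this
    ext i j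
    have hall := (Finset.sum_eq_zero_iff_of_nonneg
      (fun j _ => Finset.sum_nonneg fun i _ => Complex.normSq_nonneg _)).mp hsum j
      (Finset.mem_univ j)
    have hall2 := (Finset.sum_eq_zero_iff_of_nonneg
      (fun i _ => Complex.normSq_nonneg _)).mp hall i (Finset.mem_univ i)
    simpa using Complex.normSq_eq_zero.mp hall2
  refine ⟨μ, ?_⟩
  rw [hgeq, hXzero, zero_add]

end Aux

/-- Fixed points of the EG update are exactly the minimizers: if `ρ` minimizes `f` over the
density matrices then `ρ(α) = ρ` for all `α ≥ 0`, and conversely if `ρ(α) = ρ` for some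
`α > 0` then `ρ` is a minimizer. -/
theorem eg_fixed_point_iff_minimizer [NeZero d]
    (f : Matrix (Fin d) (Fin d) ℂ → ℝ)
    (hconv : ConvexOn ℝ {σ : Matrix (Fin d) (Fin d) ℂ | IsDensity σ} f)
    (ρ g : Matrix (Fin d) (Fin d) ℂ) (hρ : IsNSDensity ρ)
    (hg : HasHermGradAt f g ρ) :
    ((∀ σ, IsDensity σ → f ρ ≤ f σ) → ∀ α ≥ (0 : ℝ), egUpdate ρ g α = ρ) ∧
      ((∃ α > (0 : ℝ), egUpdate ρ g α = ρ) → ∀ σ, IsDensity σ → f ρ ≤ f σ) := by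
  constructor
  · intro hmin α _
    obtain ⟨μ, rfl⟩ := g_scalar_of_min hρ hg hmin
    exact egUpdate_smul_one hρ μ α
  · rintro ⟨α, hα, hfix⟩ σ hσ
    obtain ⟨μ, hgμ⟩ := g_scalar_of_fixed hρ hg.1 hα hfix
    have h0 : hinner g (σ - ρ) = 0 := by
      rw [hinner, hgμ, Matrix.smul_mul, Matrix.one_mul, Matrix.trace_smul, Matrix.trace_sub,
        hσ.2, hρ.2, sub_self, smul_zero]
      rfl
    have := grad_ineq hconv ⟨hρ.1.posSemidef, hρ.2⟩ hg hσ
    rw [h0] at this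
    linarith
end

section
/- Let H and G be Hermitian matrices in ℂ^{d×d} and define φ(α) := Real.log( tr( exp(H + α·G) ) ) for α ∈ ℝ. Then φ is differentiable on ℝ and for every α ∈ ℝ, φ'(α) = tr( G · exp(H + α·G) ) / tr( exp(H + α·G) ) = tr(G·σ_α), where σ_α := exp(H + αG)/tr exp(H + αG) is the Gibbs state. -/
open Matrix Filter
open scoped ComplexOrder Topology

variable {d : ℕ}

open NormedSpace

namespace LogPartitionAux

variable {d : ℕ}

section WithNorm

attribute [local instance] Matrix.linftyOpNormedRing Matrix.linftyOpNormedAlgebra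
  Matrix.linftyOpNormedSpace

/-- real part of trace, as a continuous linear map. -/
noncomputable def rtr : Matrix (Fin d) (Fin d) ℂ →L[ℝ] ℝ :=
  Complex.reCLM.comp (LinearMap.toContinuousLinearMap
    ((Matrix.traceLinearMap (Fin d) ℂ ℂ).restrictScalars ℝ))

lemma rtr_apply (M : Matrix (Fin d) (Fin d) ℂ) : rtr M = M.trace.re := rfl

lemma entry_norm_le (M : Matrix (Fin d) (Fin d) ℂ) (i j : Fin d) : ‖M i j‖ ≤ ‖M‖ := by
  have : ‖M i j‖₊ ≤ ‖M‖₊ := by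
    rw [Matrix.linfty_opNNNorm_def]
    exact le_trans (Finset.single_le_sum (f := fun j => ‖M i j‖₊) (fun _ _ => zero_le)
      (Finset.mem_univ j)) (Finset.le_sup (f := fun i => ∑ j, ‖M i j‖₊) (Finset.mem_univ i))
  exact this

lemma abs_trace_re_le (M : Matrix (Fin d) (Fin d) ℂ) : |M.trace.re| ≤ d * ‖M‖ := by
  calc |M.trace.re| ≤ ‖M.trace‖ := by simpa using Complex.abs_re_le_norm M.trace
    _ ≤ ∑ i : Fin d, ‖M i i‖ := by
        simpa [Matrix.trace, Matrix.diag] using norm_sum_le Finset.univ (fun i : Fin d => M i i)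
    _ ≤ ∑ _i : Fin d, ‖M‖ := Finset.sum_le_sum fun i _ => entry_norm_le M i i
    _ = d * ‖M‖ := by simp [Finset.sum_const, nsmul_eq_mul]

lemma hasDerivAt_path (H G : Matrix (Fin d) (Fin d) ℂ) (α : ℝ) :
    HasDerivAt (fun t : ℝ => H + t • G) G α := by
  exact (((hasDerivAt_id α).smul_const G).const_add H).congr_deriv (one_smul _ _)

lemma hasDerivAt_pow_path (H G : Matrix (Fin d) (Fin d) ℂ) (n : ℕ) (α : ℝ) :
    HasDerivAt (fun t : ℝ => (H + t • G) ^ n)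
      (∑ k ∈ Finset.range n, (H + α • G) ^ k * G * (H + α • G) ^ (n - 1 - k)) α := by
  induction n with
  | zero =>
    simp only [pow_zero, Finset.range_zero, Finset.sum_empty]
    exact hasDerivAt_const α _
  | succ n ih =>
      have h2 := ih.mul (hasDerivAt_path H G α)
      have h3 : (fun t : ℝ => (H + t • G) ^ (n + 1))
          = fun t : ℝ => (H + t • G) ^ n * (H + t • G) := by
        funext t; rw [pow_succ]
      rw [h3]
      refine h2.congr_deriv (Eq.symm ?_)
      rw [Finset.sum_range_succ, Finset.sum_mul]
      congr 1
      · refine Finset.sum_congr rfl fun k hk => ?_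
        rw [Finset.mem_range] at hk
        have he : n + 1 - 1 - k = (n - 1 - k) + 1 := by omega
        rw [he, pow_succ]
        simp only [mul_assoc]
      · simp

lemma trace_pow_deriv (H G : Matrix (Fin d) (Fin d) ℂ) (n : ℕ) (α : ℝ) :
    (∑ k ∈ Finset.range n, (H + α • G) ^ k * G * (H + α • G) ^ (n - 1 - k)).trace
      = (n : ℂ) * (G * (H + α • G) ^ (n - 1)).trace := by
  set A := H + α • G
  rw [Matrix.trace_sum]
  have : ∀ k ∈ Finset.range n, (A ^ k * G * A ^ (n - 1 - k)).trace = (G * A ^ (n - 1)).trace := by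
    intro k hk
    rw [Finset.mem_range] at hk
    rw [mul_assoc, Matrix.trace_mul_comm, mul_assoc, ← pow_add]
    have he : n - 1 - k + k = n - 1 := by omega
    rw [he]
  rw [Finset.sum_congr rfl this, Finset.sum_const, Finset.card_range, nsmul_eq_mul]

/-- The basic derivative result: d/dα tr exp(H + αG) = tr(G exp(H + αG)) (real parts). -/
lemma hasDerivAt_trexp [NeZero d] (H G : Matrix (Fin d) (Fin d) ℂ) (α : ℝ) :
    HasDerivAt (fun t : ℝ => (exp (H + t • G)).trace.re)
      ((G * exp (H + α • G)).trace.re) α := by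
  classical
  haveI : Nonempty (Fin d) := ⟨⟨0, Nat.pos_of_ne_zero (NeZero.ne d)⟩⟩
  haveI : NormOneClass (Matrix (Fin d) (Fin d) ℂ) := Matrix.linfty_opNormOneClass
  set R : ℝ := |α| + 1 with hR
  set C : ℝ := ‖H‖ + R * ‖G‖ with hCdef
  have hR0 : (0:ℝ) < R := by rw [hR]; positivity
  have hC0 : 0 ≤ C := by
    rw [hCdef]
    exact add_nonneg (norm_nonneg H) (mul_nonneg hR0.le (norm_nonneg G))
  set g : ℕ → ℝ → ℝ := fun n t => (((H + t • G) ^ n).trace.re) * ((n.factorial : ℝ))⁻¹ with hgdef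
  set g' : ℕ → ℝ → ℝ := fun n t =>
    ((n : ℝ) * ((n.factorial : ℝ))⁻¹) * ((G * (H + t • G) ^ (n - 1)).trace.re) with hg'def
  set u : ℕ → ℝ := fun n => ((d : ℝ) * ‖G‖) * (C ^ (n - 1) / ((n - 1).factorial : ℝ)) with hudef
  -- each term has the required derivative
  have hgderiv : ∀ (n : ℕ) (y : ℝ), HasDerivAt (g n) (g' n y) y := by
    intro n y
    have h1 := (rtr.hasFDerivAt.comp_hasDerivAt y (hasDerivAt_pow_path H G n y)).mul_const
      ((n.factorial : ℝ))⁻¹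
    refine h1.congr_deriv (Eq.symm ?_)
    change g' n y = (∑ k ∈ Finset.range n, (H + y • G) ^ k * G * (H + y • G) ^ (n - 1 - k)).trace.re * _
    rw [trace_pow_deriv]
    have : ((n : ℂ) * (G * (H + y • G) ^ (n - 1)).trace).re
        = (n : ℝ) * ((G * (H + y • G) ^ (n - 1)).trace).re := by
      rw [show ((n : ℂ)) = (((n : ℝ) : ℂ)) by push_cast; ring, Complex.re_ofReal_mul]
    rw [hg'def]; simp only []
    rw [this]; ring
  -- norm bound for the path on the ball
  have hpathbound : ∀ y ∈ Metric.ball (0:ℝ) R, ∀ m : ℕ, ‖(H + y • G) ^ m‖ ≤ C ^ m := by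
    intro y hy m
    have hy' : |y| < R := by simpa [Real.norm_eq_abs] using Metric.mem_ball.mp hy
    have hA : ‖H + y • G‖ ≤ C := by
      calc ‖H + y • G‖ ≤ ‖H‖ + ‖y • G‖ := norm_add_le _ _
        _ = ‖H‖ + |y| * ‖G‖ := by rw [norm_smul, Real.norm_eq_abs]
        _ ≤ ‖H‖ + R * ‖G‖ := by
            have := mul_le_mul_of_nonneg_right hy'.le (norm_nonneg G)
            linarith
    cases m with
    | zero => simp
    | succ m =>
        calc ‖(H + y • G) ^ (m+1)‖ ≤ ‖H + y • G‖ ^ (m+1) := norm_pow_le' _ m.succ_pos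
          _ ≤ C ^ (m+1) := pow_le_pow_left₀ (norm_nonneg _) hA _
  -- bound on the derivatives
  have hg'bound : ∀ (n : ℕ) (y : ℝ), y ∈ Metric.ball (0:ℝ) R → ‖g' n y‖ ≤ u n := by
    intro n y hy
    cases n with
    | zero =>
        have h0 : g' 0 y = 0 := by simp [hg'def]
        rw [h0, norm_zero]
        exact mul_nonneg (mul_nonneg (Nat.cast_nonneg d) (norm_nonneg G))
          (div_nonneg (pow_nonneg hC0 _) (Nat.cast_nonneg _))
    | succ n =>
        have h1 : ((n+1 : ℕ) : ℝ) * (((n+1).factorial : ℝ))⁻¹ = ((n.factorial : ℝ))⁻¹ := by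
          rw [Nat.factorial_succ]
          push_cast
          rw [mul_inv]
          rw [← mul_assoc, mul_inv_cancel₀ (by positivity), one_mul]
        have h2 : |(G * (H + y • G) ^ n).trace.re| ≤ (d : ℝ) * ‖G‖ * C ^ n := by
          calc |(G * (H + y • G) ^ n).trace.re| ≤ d * ‖G * (H + y • G) ^ n‖ :=
                abs_trace_re_le _
            _ ≤ d * (‖G‖ * ‖(H + y • G) ^ n‖) := by
                have h := norm_mul_le G ((H + y • G) ^ n)
                gcongr
            _ ≤ d * (‖G‖ * C ^ n) := by
                have h := hpathbound y hy n
                gcongr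
            _ = (d:ℝ) * ‖G‖ * C ^ n := by ring
        have habs : ‖g' (n+1) y‖
            = ((n.factorial : ℝ))⁻¹ * |(G * (H + y • G) ^ n).trace.re| := by
          simp only [hg'def, Nat.add_sub_cancel, Real.norm_eq_abs, abs_mul]
          rw [abs_of_nonneg (Nat.cast_nonneg (n+1)),
            abs_of_nonneg (inv_nonneg.mpr (Nat.cast_nonneg ((n+1).factorial))), h1]
        rw [habs]
        have hu1 : u (n+1) = (d : ℝ) * ‖G‖ * (C ^ n / (n.factorial : ℝ)) := by
          simp [hudef]
        rw [hu1]
        calc ((n.factorial : ℝ))⁻¹ * |(G * (H + y • G) ^ n).trace.re|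
            ≤ ((n.factorial : ℝ))⁻¹ * ((d : ℝ) * ‖G‖ * C ^ n) := by
              have : (0:ℝ) ≤ ((n.factorial : ℝ))⁻¹ := by positivity
              exact mul_le_mul_of_nonneg_left h2 this
          _ = (d : ℝ) * ‖G‖ * (C ^ n / (n.factorial : ℝ)) := by ring
  -- summability of the bound
  have husum : Summable u := by
    have hv : Summable (fun m : ℕ => C ^ m / (m.factorial : ℝ)) :=
      Real.summable_pow_div_factorial C
    have hv' : Summable (fun n : ℕ => C ^ (n-1) / ((n-1).factorial : ℝ)) := by
      rw [← summable_nat_add_iff 1]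
      simpa using hv
    simpa [hudef, mul_div_assoc] using hv'.mul_left ((d : ℝ) * ‖G‖)
  -- summability of g at α
  have hg0 : Summable (fun n => g n α) := by
    set Cm : ℝ := max 1 ‖H + α • G‖ with hCm
    have hCm0 : 0 ≤ Cm := le_trans zero_le_one (le_max_left _ _)
    refine Summable.of_norm_bounded
      ((Real.summable_pow_div_factorial Cm).mul_left (d : ℝ)) ?_
    intro n
    have hpow : ‖(H + α • G) ^ n‖ ≤ Cm ^ n := by
      cases n with
      | zero => simp
      | succ m =>
          calc ‖(H + α • G) ^ (m+1)‖ ≤ ‖H + α • G‖ ^ (m+1) := norm_pow_le' _ m.succ_pos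
            _ ≤ Cm ^ (m+1) := pow_le_pow_left₀ (norm_nonneg _) (le_max_right _ _) _
    have h2 : |((H + α • G) ^ n).trace.re| ≤ (d : ℝ) * Cm ^ n := by
      calc |((H + α • G) ^ n).trace.re| ≤ d * ‖(H + α • G) ^ n‖ := abs_trace_re_le _
        _ ≤ d * Cm ^ n := by gcongr
    show ‖(((H + α • G) ^ n).trace.re) * ((n.factorial : ℝ))⁻¹‖
      ≤ (d : ℝ) * (Cm ^ n / (n.factorial : ℝ))
    rw [Real.norm_eq_abs, abs_mul, abs_of_nonneg (by positivity : (0:ℝ) ≤ ((n.factorial:ℝ))⁻¹)]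
    calc |((H + α • G) ^ n).trace.re| * ((n.factorial : ℝ))⁻¹
        ≤ ((d : ℝ) * Cm ^ n) * ((n.factorial : ℝ))⁻¹ :=
          mul_le_mul_of_nonneg_right h2 (by positivity)
      _ = (d : ℝ) * (Cm ^ n / (n.factorial : ℝ)) := by ring
  -- the key derivative of the tsum
  have hα : α ∈ Metric.ball (0:ℝ) R := by
    simp only [Metric.mem_ball, dist_zero_right, Real.norm_eq_abs]
    linarith
  have hts : HasDerivAt (fun t => ∑' n, g n t) (∑' n, g' n α) α :=
    hasDerivAt_tsum_of_isPreconnected husum Metric.isOpen_ball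
      (convex_ball (0:ℝ) R).isPreconnected (fun n y _ => hgderiv n y)
      hg'bound hα hg0 hα
  -- identify the tsum with trace exp
  have hexp_sum : ∀ A : Matrix (Fin d) (Fin d) ℂ,
      Summable (fun n : ℕ => ((n.factorial : ℂ))⁻¹ • A ^ n) := fun A => expSeries_summable' A
  have hψ : ∀ t : ℝ, ∑' n, g n t = (exp (H + t • G)).trace.re := by
    intro t
    rw [exp_eq_tsum (𝕂 := ℂ), ← rtr_apply, ContinuousLinearMap.map_tsum rtr (hexp_sum _)]
    refine tsum_congr fun n => ?_
    rw [rtr_apply, Matrix.trace_smul]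
    simp only [smul_eq_mul]
    have hc : ((n.factorial : ℂ))⁻¹ = Complex.ofReal ((n.factorial : ℝ))⁻¹ := by
      push_cast; ring
    rw [hc, Complex.re_ofReal_mul, hgdef]
    ring
  -- identify the sum of derivatives
  have hg'sum : Summable (fun n => g' n α) :=
    Summable.of_norm_bounded husum (fun n => hg'bound n α hα)
  have hsum' : ∑' n, g' n α = (G * exp (H + α • G)).trace.re := by
    have hmul : G * exp (H + α • G)
        = ∑' n : ℕ, G * (((n.factorial : ℂ))⁻¹ • (H + α • G) ^ n) := by
      rw [exp_eq_tsum (𝕂 := ℂ)]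
      exact (ContinuousLinearMap.map_tsum (ContinuousLinearMap.mul ℂ _ G) (hexp_sum _))
    rw [hmul, ← rtr_apply, ContinuousLinearMap.map_tsum rtr]
    · rw [Summable.tsum_eq_zero_add hg'sum]
      have hz : g' 0 α = 0 := by simp [hg'def]
      rw [hz, zero_add]
      refine tsum_congr fun n => ?_
      rw [rtr_apply, mul_smul_comm, Matrix.trace_smul]
      simp only [smul_eq_mul]
      have hc : ((n.factorial : ℂ))⁻¹ = Complex.ofReal ((n.factorial : ℝ))⁻¹ := by
        push_cast; ring
      rw [hc, Complex.re_ofReal_mul]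
      have h1 : ((n+1 : ℕ) : ℝ) * (((n+1).factorial : ℝ))⁻¹ = ((n.factorial : ℝ))⁻¹ := by
        rw [Nat.factorial_succ]; push_cast; rw [mul_inv]
        rw [← mul_assoc, mul_inv_cancel₀ (by positivity), one_mul]
      show ((n+1 : ℕ) : ℝ) * (((n+1).factorial : ℝ))⁻¹
          * ((G * (H + α • G) ^ (n+1-1)).trace.re)
        = ((n.factorial : ℝ))⁻¹ * ((G * (H + α • G) ^ n).trace.re)
      rw [h1, Nat.add_sub_cancel]
    · exact ((hexp_sum (H + α • G)).map (ContinuousLinearMap.mul ℂ _ G)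
        (ContinuousLinearMap.mul ℂ _ G).continuous)
  rw [funext hψ] at hts
  rwa [hsum'] at hts

end WithNorm

/-- Positivity of the trace of the exponential of a Hermitian matrix. -/
lemma trace_exp_pos [NeZero d] (A : Matrix (Fin d) (Fin d) ℂ) (hA : A.IsHermitian) :
    0 < (exp A).trace.re := by
  set B : Matrix (Fin d) (Fin d) ℂ := exp ((2:ℝ)⁻¹ • A) with hBdef
  have hhalf : ((2:ℝ)⁻¹ • A).IsHermitian := by
    unfold Matrix.IsHermitian
    rw [Matrix.conjTranspose_smul, hA.eq, star_trivial]
  have hBH : B.IsHermitian := Matrix.IsHermitian.exp hhalf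
  have hBB : B * B = exp A := by
    rw [hBdef, ← Matrix.exp_add_of_commute _ _ (Commute.refl _), ← add_smul]
    norm_num
  have htr : (exp A).trace.re = ∑ i : Fin d, ∑ j : Fin d, Complex.normSq (B j i) := by
    rw [← hBB]
    nth_rewrite 1 [← hBH.eq]
    rw [Matrix.trace]
    rw [Complex.re_sum]
    refine Finset.sum_congr rfl fun i _ => ?_
    rw [Matrix.diag_apply, Matrix.mul_apply, Complex.re_sum]
    refine Finset.sum_congr rfl fun j _ => ?_
    rw [Matrix.conjTranspose_apply]
    simp [Complex.normSq_apply, Complex.mul_re]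
  rw [htr]
  have hBne : B ≠ 0 := by
    intro h0
    have hunit : IsUnit B := Matrix.isUnit_exp _
    obtain ⟨v, hv⟩ := hunit
    have : (1 : Matrix (Fin d) (Fin d) ℂ) = 0 := by
      have hinv := v.inv_mul
      rw [hv, h0, mul_zero] at hinv
      exact hinv.symm
    have i0 : Fin d := ⟨0, Nat.pos_of_ne_zero (NeZero.ne d)⟩
    have := congrFun (congrFun this i0) i0
    simp at this
  obtain ⟨j, i, hij⟩ : ∃ j i, B j i ≠ 0 := by
    by_contra h
    push_neg at h
    exact hBne (by ext j i; simpa using h j i)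
  refine Finset.sum_pos' (fun i _ => Finset.sum_nonneg fun j _ => Complex.normSq_nonneg _) ?_
  refine ⟨i, Finset.mem_univ i, Finset.sum_pos' (fun j _ => Complex.normSq_nonneg _)
    ⟨j, Finset.mem_univ j, ?_⟩⟩
  exact Complex.normSq_pos.mpr hij

end LogPartitionAux


/-- First derivative of the log-partition function: `φ'(α) = tr(G·σ_α)` where
`σ_α = exp(H + αG)/tr exp(H + αG)` is the Gibbs state. -/
theorem logpartition_deriv [NeZero d]
    (H G : Matrix (Fin d) (Fin d) ℂ) (hH : H.IsHermitian) (hG : G.IsHermitian)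
    (φ : ℝ → ℝ)
    (hφ : ∀ a : ℝ, φ a = Real.log ((NormedSpace.exp (H + a • G)).trace.re)) :
    (∀ α : ℝ, DifferentiableAt ℝ φ α) ∧
      ∀ α : ℝ,
        deriv φ α =
          ((G * NormedSpace.exp (H + α • G)).trace.re) /
            ((NormedSpace.exp (H + α • G)).trace.re) := by
  have hmain : ∀ α : ℝ, HasDerivAt φ
      (((G * NormedSpace.exp (H + α • G)).trace.re) /
        ((NormedSpace.exp (H + α • G)).trace.re)) α := by
    intro α
    have herm : (H + α • G).IsHermitian := by
      unfold Matrix.IsHermitian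
      rw [Matrix.conjTranspose_add, Matrix.conjTranspose_smul, hH.eq, hG.eq, star_trivial]
    have hpos := LogPartitionAux.trace_exp_pos (H + α • G) herm
    have hd := (LogPartitionAux.hasDerivAt_trexp H G α).log (ne_of_gt hpos)
    have hfe : φ = fun t => Real.log ((NormedSpace.exp (H + t • G)).trace.re) := funext hφ
    rw [hfe]
    exact hd
  exact ⟨fun α => (hmain α).differentiableAt, fun α => (hmain α).deriv⟩
end
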